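/- Under the Setup, let s be the orthogonal projection of A onto L₁ and let s' be the orthogonal projection of A onto L₁''. Then |ss'| = 2 and 2 < |sd| < 1 + |AC|, where d is the intersection point of L₁ with [BC] and |AC| is the length of the diagonal of ABCD. -/

import Mathlib

open Real

noncomputable section

/-- Points of the Euclidean plane. -/
abbrev Pt := EuclideanSpace ℝ (Fin 2)

/-- An axis-aligned rectangle (all sides of positive length, parallel to the axes),
given by the coordinates of its sides. -/
structure AARect where
  xmin : ℝ
  xmax : ℝ
  ymin : ℝ
  ymax : ℝ
  hx : xmin < xmax
  hy : ymin < ymax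

/-- The set of points of an axis-aligned rectangle. -/
def AARect.set (R : AARect) : Set Pt :=
  {q | q 0 ∈ Set.Icc R.xmin R.xmax ∧ q 1 ∈ Set.Icc R.ymin R.ymax}

/-- The center of an axis-aligned rectangle. -/
def AARect.center (R : AARect) : Pt :=
  !₂[(R.xmin + R.xmax) / 2, (R.ymin + R.ymax) / 2]

/-- The North-West vertex `A`. -/
def AARect.A (R : AARect) : Pt := !₂[R.xmin, R.ymax]

/-- The North-East vertex `B`. -/
def AARect.B (R : AARect) : Pt := !₂[R.xmax, R.ymax]

/-- The South-East vertex `C`. -/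
def AARect.C (R : AARect) : Pt := !₂[R.xmax, R.ymin]

/-- The South-West vertex `D`. -/
def AARect.D (R : AARect) : Pt := !₂[R.xmin, R.ymin]

/-- The line through the point `p` with direction vector `v`. -/
def lineThrough (p v : Pt) : Set Pt := {q | ∃ t : ℝ, q = p + t • v}

/-- The closed half-plane to the right (East) of the (non-vertical) line through `p` with
direction `v`: the set of points having, on that line, a point with the same second
coordinate and a smaller-or-equal first coordinate. -/
def rightOf (p v : Pt) : Set Pt :=
  {q | ∃ w ∈ lineThrough p v, w 1 = q 1 ∧ w 0 ≤ q 0}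


lemma dist_eq2 (x y : Pt) :
    dist x y = Real.sqrt ((x 0 - y 0)^2 + (x 1 - y 1)^2) := by
  rw [EuclideanSpace.dist_eq, Fin.sum_univ_two]
  norm_num [Real.dist_eq, sq_abs]

/-- Setup: `R = ABCD` is an axis-aligned rectangle with all sides of length at least 4 and
center `p`; `L₁` is the line through `p` with direction `v` of negative slope, meeting
`[AD]` at `a` and `[BC]` at `d`, with `|Aa| < 1`; `p'` is the point at distance 2 from `p`
on the perpendicular to `L₁` through `p`, on the side of `L₁` to the right of `L₁`;
`L₁''` is the line through `p'` parallel to `L₁`. If `s` is the orthogonal projection of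
`A` onto `L₁` and `s'` the orthogonal projection of `A` onto `L₁''`, then `|ss'| = 2` and
`2 < |sd| < 1 + |AC|`. -/
theorem dist_ss'_sd (R : AARect)
    (h4x : 4 ≤ R.xmax - R.xmin) (h4y : 4 ≤ R.ymax - R.ymin)
    (v : Pt) (hv : v 0 * v 1 < 0)
    (a : Pt) (haL : a ∈ lineThrough R.center v)
    (ha0 : a 0 = R.xmin) (ha1 : a 1 ∈ Set.Icc R.ymin R.ymax)
    (haA : dist R.A a < 1)
    (d : Pt) (hdL : d ∈ lineThrough R.center v)
    (hd0 : d 0 = R.xmax) (hd1 : d 1 ∈ Set.Icc R.ymin R.ymax)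
    (p' : Pt) (hp'dist : dist R.center p' = 2)
    (hp'perp : (inner ℝ (p' - R.center) v : ℝ) = 0)
    (hp'side : p' ∈ rightOf R.center v)
    (s : Pt) (hsL : s ∈ lineThrough R.center v)
    (hs : (inner ℝ (R.A - s) v : ℝ) = 0)
    (s' : Pt) (hs'L : s' ∈ lineThrough p' v)
    (hs' : (inner ℝ (R.A - s') v : ℝ) = 0) :
    dist s s' = 2 ∧ 2 < dist s d ∧ dist s d < 1 + dist R.A R.C := by
  obtain ⟨ta, hta⟩ := haL
  obtain ⟨td, htd⟩ := hdL
  obtain ⟨ts, hts⟩ := hsL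
  obtain ⟨ts', hts'⟩ := hs'L
  have hvne : v ≠ 0 := by
    intro h; rw [h] at hv; simp at hv
  have h1 : (inner ℝ (s' - s) v : ℝ) = 0 := by
    have h : s' - s = (R.A - s) - (R.A - s') := by abel
    rw [h, inner_sub_left, hs, hs']; ring
  have hss' : s' - s = (p' - R.center) + (ts' - ts) • v := by
    rw [hts, hts', sub_smul]; abel
  have h2 : (ts' - ts) * (inner ℝ v v : ℝ) = 0 := by
    rw [hss', inner_add_left, hp'perp, real_inner_smul_left] at h1; linarith
  have h3 : ts' = ts := by
    rcases mul_eq_zero.mp h2 with h | h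
    · linarith
    · exact absurd (inner_self_eq_zero.mp h) hvne
  have h4 : s' - s = p' - R.center := by
    rw [hss', h3]; simp
  have part1 : dist s s' = 2 := by
    rw [dist_eq_norm, ← norm_neg, neg_sub, h4, ← dist_eq_norm, dist_comm]
    exact hp'dist
  have hsa : s - a = (ts - ta) • v := by rw [hts, hta, sub_smul]; abel
  have hperp : (inner ℝ (R.A - s) (s - a) : ℝ) = 0 := by
    rw [hsa, real_inner_smul_right, hs, mul_zero]
  have hpy : dist R.A a ^ 2 = dist R.A s ^ 2 + dist s a ^ 2 := by
    rw [dist_eq_norm, dist_eq_norm, dist_eq_norm]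
    have h : R.A - a = (R.A - s) + (s - a) := by abel
    rw [h, norm_add_sq_real, hperp]; ring
  have hsa_le : dist s a ≤ dist R.A a := by
    have h5 : dist s a ^ 2 ≤ dist R.A a ^ 2 := by nlinarith [sq_nonneg (dist R.A s)]
    calc dist s a = Real.sqrt (dist s a ^ 2) := (Real.sqrt_sq dist_nonneg).symm
    _ ≤ Real.sqrt (dist R.A a ^ 2) := Real.sqrt_le_sqrt h5
    _ = dist R.A a := Real.sqrt_sq dist_nonneg
  have hsa1 : dist s a < 1 := lt_of_le_of_lt hsa_le haA
  have had : dist a d = Real.sqrt ((R.xmin - R.xmax)^2 + (a 1 - d 1)^2) := by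
    rw [dist_eq2, ha0, hd0]
  have had_lb : R.xmax - R.xmin ≤ dist a d := by
    rw [had]
    calc R.xmax - R.xmin ≤ |R.xmin - R.xmax| := by rw [abs_sub_comm]; exact le_abs_self _
    _ = Real.sqrt ((R.xmin - R.xmax)^2) := (Real.sqrt_sq_eq_abs _).symm
    _ ≤ _ := Real.sqrt_le_sqrt (by nlinarith [sq_nonneg (a 1 - d 1)])
  have hAC : dist R.A R.C = Real.sqrt ((R.xmin - R.xmax)^2 + (R.ymax - R.ymin)^2) := by
    rw [dist_eq2]; norm_num [AARect.A, AARect.C]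
  have had_ub : dist a d ≤ dist R.A R.C := by
    rw [had, hAC]
    apply Real.sqrt_le_sqrt
    obtain ⟨ha1l, ha1u⟩ := ha1; obtain ⟨hd1l, hd1u⟩ := hd1
    have h6 : (a 1 - d 1)^2 ≤ (R.ymax - R.ymin)^2 :=
      sq_le_sq' (by linarith) (by linarith)
    linarith
  have hcomm : dist a s = dist s a := dist_comm _ _
  refine ⟨part1, ?_, ?_⟩
  · have ht := dist_triangle a s d
    linarith
  · have ht := dist_triangle s a d
    linarith
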